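/- For n ≥ 2, the subgroup of (n−2)-decomposable braids in the pure braid group P_n (those q ∈ P_n with φ_S(q) = 1 for every subset S ⊆ N of cardinality n−2) equals the commutator subgroup [P_n, P_n] of P_n. -/

import Mathlib

/-!
Common setup: the pure braid group `P_n` as a presented group, the subgroups
`P_S` and `Q_S`, the characterization of the homomorphisms `φ_S`, the support
`σ(x)`, and monic commutators.
-/

/-- The free-group generator corresponding to the pure braid generator
`p_{a,b}` for `a < b` (indices in `Fin n`, so strand `i+1` of `{1,…,n}`
corresponds to `i : Fin n`). -/
def pf {n : ℕ} (a b : Fin n) (h : a < b) :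
    FreeGroup {q : Fin n × Fin n // q.1 < q.2} :=
  FreeGroup.of ⟨(a, b), h⟩

/-- The defining relations (A), (B), (C) of the pure braid group `P_n`,
each written in the form `lhs⁻¹ * rhs` for an equation `lhs = rhs`. -/
def braidRels (n : ℕ) : Set (FreeGroup {q : Fin n × Fin n // q.1 < q.2}) :=
  -- (A) first equality: p_{a,b} p_{a,c} p_{b,c} = p_{a,c} p_{b,c} p_{a,b}
  {r | ∃ (a b c : Fin n) (hab : a < b) (hbc : b < c),
      r = (pf a b hab * pf a c (hab.trans hbc) * pf b c hbc)⁻¹ *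
          (pf a c (hab.trans hbc) * pf b c hbc * pf a b hab)} ∪
  -- (A) second equality: p_{a,b} p_{a,c} p_{b,c} = p_{b,c} p_{a,b} p_{a,c}
  {r | ∃ (a b c : Fin n) (hab : a < b) (hbc : b < c),
      r = (pf a b hab * pf a c (hab.trans hbc) * pf b c hbc)⁻¹ *
          (pf b c hbc * pf a b hab * pf a c (hab.trans hbc))} ∪
  -- (B) first: p_{a,b} p_{c,d} = p_{c,d} p_{a,b}
  {r | ∃ (a b c d : Fin n) (hab : a < b) (hbc : b < c) (hcd : c < d),
      r = (pf a b hab * pf c d hcd)⁻¹ * (pf c d hcd * pf a b hab)} ∪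
  -- (B) second: p_{a,d} p_{b,c} = p_{b,c} p_{a,d}
  {r | ∃ (a b c d : Fin n) (hab : a < b) (hbc : b < c) (hcd : c < d),
      r = (pf a d (hab.trans (hbc.trans hcd)) * pf b c hbc)⁻¹ *
          (pf b c hbc * pf a d (hab.trans (hbc.trans hcd)))} ∪
  -- (C): p_{a,c} (p_{b,c}⁻¹ p_{b,d} p_{b,c}) = (p_{b,c}⁻¹ p_{b,d} p_{b,c}) p_{a,c}
  {r | ∃ (a b c d : Fin n) (hab : a < b) (hbc : b < c) (hcd : c < d),
      r = (pf a c (hab.trans hbc) * ((pf b c hbc)⁻¹ * pf b d (hbc.trans hcd) * pf b c hbc))⁻¹ *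
          ((pf b c hbc)⁻¹ * pf b d (hbc.trans hcd) * pf b c hbc * pf a c (hab.trans hbc))}

/-- The pure braid group `P_n`, given by the presentation above. -/
abbrev PB (n : ℕ) := PresentedGroup (braidRels n)

/-- The generator `p_{a,b}` of the pure braid group, for `a < b`. -/
def p {n : ℕ} (a b : Fin n) (h : a < b) : PB n := PresentedGroup.of ⟨(a, b), h⟩

/-- `P_S`: the subgroup of `P_n` generated by all `p_{a,b}` with `a ∈ S` and `b ∈ S`. -/
def PS {n : ℕ} (S : Set (Fin n)) : Subgroup (PB n) :=
  Subgroup.closure {x | ∃ (a b : Fin n) (h : a < b), a ∈ S ∧ b ∈ S ∧ x = p a b h}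

/-- `Q_S`: the subgroup of `P_n` generated by all `p_{a,b}` with `a ∈ S` or `b ∈ S`. -/
def QS {n : ℕ} (S : Set (Fin n)) : Subgroup (PB n) :=
  Subgroup.closure {x | ∃ (a b : Fin n) (h : a < b), (a ∈ S ∨ b ∈ S) ∧ x = p a b h}

/-- `IsPhi S φ` says that `φ : P_n → P_n` is the homomorphism `φ_S`, i.e. it sends
`p_{a,b}` to itself if `a ∉ S` and `b ∉ S`, and to `1` otherwise. -/
def IsPhi {n : ℕ} (S : Set (Fin n)) (φ : PB n →* PB n) : Prop :=
  ∀ (a b : Fin n) (h : a < b),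
    (a ∉ S ∧ b ∉ S → φ (p a b h) = p a b h) ∧ ((a ∈ S ∨ b ∈ S) → φ (p a b h) = 1)

/-- The support `σ(x)` of `x ∈ P_n`: the intersection of all `S` with `x ∈ P_S`. -/
def support {n : ℕ} (x : PB n) : Set (Fin n) := ⋂₀ {S | x ∈ PS S}

/-- Monic commutators: the smallest set of elements of `P_n` containing all
`p_{a,b}` and `p_{a,b}⁻¹` and closed under taking nontrivial commutators
`[x,y] = x⁻¹ y⁻¹ x y`. -/
inductive IsMonic {n : ℕ} : PB n → Prop
  | of (a b : Fin n) (h : a < b) : IsMonic (p a b h)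
  | inv (a b : Fin n) (h : a < b) : IsMonic (p a b h)⁻¹
  | comm (x y : PB n) : IsMonic x → IsMonic y → x⁻¹ * y⁻¹ * x * y ≠ 1 →
      IsMonic (x⁻¹ * y⁻¹ * x * y)

namespace NSub2

variable {n : ℕ}

abbrev Pr (n : ℕ) := {q : Fin n × Fin n // q.1 < q.2}

lemma mk_rel_eq_one {r : FreeGroup (Pr n)} (hr : r ∈ braidRels n) :
    PresentedGroup.mk (braidRels n) r = 1 :=
  (QuotientGroup.eq_one_iff r).mpr (Subgroup.subset_normalClosure hr)

lemma rel_eq {x y : FreeGroup (Pr n)} (hr : x⁻¹ * y ∈ braidRels n) :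
    PresentedGroup.mk (braidRels n) x = PresentedGroup.mk (braidRels n) y := by
  have := mk_rel_eq_one hr
  rwa [map_mul, map_inv, inv_mul_eq_one] at this

lemma relA1 (a b c : Fin n) (hab : a < b) (hbc : b < c) :
    p a b hab * p a c (hab.trans hbc) * p b c hbc =
      p a c (hab.trans hbc) * p b c hbc * p a b hab := by
  simpa [map_mul, p, PresentedGroup.of, pf] using
    rel_eq (n := n) (Or.inl (Or.inl (Or.inl (Or.inl ⟨a, b, c, hab, hbc, rfl⟩))))

lemma relA2 (a b c : Fin n) (hab : a < b) (hbc : b < c) :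
    p a b hab * p a c (hab.trans hbc) * p b c hbc =
      p b c hbc * p a b hab * p a c (hab.trans hbc) := by
  simpa [map_mul, p, PresentedGroup.of, pf] using
    rel_eq (n := n) (Or.inl (Or.inl (Or.inl (Or.inr ⟨a, b, c, hab, hbc, rfl⟩))))

lemma relB1 (a b c d : Fin n) (hab : a < b) (hbc : b < c) (hcd : c < d) :
    p a b hab * p c d hcd = p c d hcd * p a b hab := by
  simpa [map_mul, p, PresentedGroup.of, pf] using
    rel_eq (n := n) (Or.inl (Or.inl (Or.inr ⟨a, b, c, d, hab, hbc, hcd, rfl⟩)))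

lemma relB2 (a b c d : Fin n) (hab : a < b) (hbc : b < c) (hcd : c < d) :
    p a d (hab.trans (hbc.trans hcd)) * p b c hbc =
      p b c hbc * p a d (hab.trans (hbc.trans hcd)) := by
  simpa [map_mul, p, PresentedGroup.of, pf] using
    rel_eq (n := n) (Or.inl (Or.inr ⟨a, b, c, d, hab, hbc, hcd, rfl⟩))

lemma relC (a b c d : Fin n) (hab : a < b) (hbc : b < c) (hcd : c < d) :
    p a c (hab.trans hbc) * ((p b c hbc)⁻¹ * p b d (hbc.trans hcd) * p b c hbc) =
      (p b c hbc)⁻¹ * p b d (hbc.trans hcd) * p b c hbc * p a c (hab.trans hbc) := by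
  simpa [map_mul, map_inv, p, PresentedGroup.of, pf] using
    rel_eq (n := n) (Or.inr ⟨a, b, c, d, hab, hbc, hcd, rfl⟩)

end NSub2
namespace NSub2

noncomputable def psiFun (n : ℕ) : Pr n → Multiplicative (Pr n →₀ ℤ) :=
  fun s => Multiplicative.ofAdd (Finsupp.single s 1)

set_option maxHeartbeats 1000000 in
lemma psi_rels (n : ℕ) : ∀ r ∈ braidRels n, FreeGroup.lift (psiFun n) r = 1 := by
  intro r hr
  rcases hr with ((((⟨a,b,c,hab,hbc,rfl⟩ | ⟨a,b,c,hab,hbc,rfl⟩) | ⟨a,b,c,d,hab,hbc,hcd,rfl⟩) |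
    ⟨a,b,c,d,hab,hbc,hcd,rfl⟩) | ⟨a,b,c,d,hab,hbc,hcd,rfl⟩) <;>
    simp only [map_mul, map_inv, pf, FreeGroup.lift_apply_of, inv_mul_eq_one] <;>
    first
      | exact mul_rotate _ _ _
      | exact (mul_rotate _ _ _).symm
      | exact mul_comm _ _

noncomputable def psi (n : ℕ) : PB n →* Multiplicative (Pr n →₀ ℤ) :=
  PresentedGroup.toGroup (psi_rels n)

lemma psi_of (n : ℕ) (s : Pr n) :
    psi n (PresentedGroup.of s) = Multiplicative.ofAdd (Finsupp.single s 1) :=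
  PresentedGroup.toGroup.of (psi_rels n)

noncomputable def theta (n : ℕ) : Multiplicative (Pr n →₀ ℤ) →* Abelianization (PB n) :=
  AddMonoidHom.toMultiplicativeLeft
    (Finsupp.liftAddHom fun s =>
      (zmultiplesHom (Additive (Abelianization (PB n))))
        (Additive.ofMul (Abelianization.of (p s.1.1 s.1.2 s.2))))

lemma theta_single (n : ℕ) (s : Pr n) :
    theta n (Multiplicative.ofAdd (Finsupp.single s 1)) =
      Abelianization.of (p s.1.1 s.1.2 s.2) := by
  simp [theta, Finsupp.liftAddHom_apply_single]

lemma theta_psi {n : ℕ} (q : PB n) : theta n (psi n q) = Abelianization.of q := by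
  have : (theta n).comp (psi n) = (Abelianization.of : PB n →* Abelianization (PB n)) := by
    ext s
    obtain ⟨⟨a, b⟩, h⟩ := s
    rw [MonoidHom.comp_apply, psi_of, theta_single]
    rfl
  simpa using DFunLike.congr_fun this q

lemma mem_comm_iff {n : ℕ} (q : PB n) :
    q ∈ commutator (PB n) ↔ (Abelianization.of q = 1) :=
  (QuotientGroup.eq_one_iff q).symm

end NSub2
namespace NSub2

open Classical in
noncomputable def phiFun (S : Set (Fin n)) : Pr n → PB n :=
  fun s => if s.1.1 ∈ S ∨ s.1.2 ∈ S then 1 else p s.1.1 s.1.2 s.2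

set_option maxHeartbeats 2000000 in
lemma phi_rels (S : Set (Fin n)) :
    ∀ r ∈ braidRels n, FreeGroup.lift (phiFun S) r = 1 := by
  intro r hr
  rcases hr with ((((⟨a,b,c,hab,hbc,rfl⟩ | ⟨a,b,c,hab,hbc,rfl⟩) | ⟨a,b,c,d,hab,hbc,hcd,rfl⟩) |
    ⟨a,b,c,d,hab,hbc,hcd,rfl⟩) | ⟨a,b,c,d,hab,hbc,hcd,rfl⟩)
  case inl.inl.inl.inl =>
    by_cases ha : a ∈ S <;> by_cases hb : b ∈ S <;> by_cases hc : c ∈ S <;>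
      simp only [map_mul, map_inv, pf, FreeGroup.lift_apply_of, phiFun, ha, hb, hc, if_true, if_false,
        or_self, or_true, true_or, or_false, false_or, inv_mul_eq_one] <;>
      first | exact relA1 a b c hab hbc | group
  case inl.inl.inl.inr =>
    by_cases ha : a ∈ S <;> by_cases hb : b ∈ S <;> by_cases hc : c ∈ S <;>
      simp only [map_mul, map_inv, pf, FreeGroup.lift_apply_of, phiFun, ha, hb, hc, if_true, if_false,
        or_self, or_true, true_or, or_false, false_or, inv_mul_eq_one] <;>
      first | exact relA2 a b c hab hbc | group
  case inl.inl.inr =>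
    by_cases ha : a ∈ S <;> by_cases hb : b ∈ S <;> by_cases hc : c ∈ S <;>
      by_cases hd : d ∈ S <;>
      simp only [map_mul, map_inv, pf, FreeGroup.lift_apply_of, phiFun, ha, hb, hc, hd, if_true,
        if_false, or_self, or_true, true_or, or_false, false_or, inv_mul_eq_one] <;>
      first | exact relB1 a b c d hab hbc hcd | group
  case inl.inr =>
    by_cases ha : a ∈ S <;> by_cases hb : b ∈ S <;> by_cases hc : c ∈ S <;>
      by_cases hd : d ∈ S <;>
      simp only [map_mul, map_inv, pf, FreeGroup.lift_apply_of, phiFun, ha, hb, hc, hd, if_true,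
        if_false, or_self, or_true, true_or, or_false, false_or, inv_mul_eq_one] <;>
      first | exact relB2 a b c d hab hbc hcd | group
  case inr =>
    by_cases ha : a ∈ S <;> by_cases hb : b ∈ S <;> by_cases hc : c ∈ S <;>
      by_cases hd : d ∈ S <;>
      simp only [map_mul, map_inv, pf, FreeGroup.lift_apply_of, phiFun, ha, hb, hc, hd, if_true,
        if_false, or_self, or_true, true_or, or_false, false_or, inv_mul_eq_one] <;>
      first | exact relC a b c d hab hbc hcd | group

noncomputable def phiS (S : Set (Fin n)) : PB n →* PB n :=
  PresentedGroup.toGroup (phi_rels S)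

lemma isPhi_phiS (S : Set (Fin n)) : IsPhi S (phiS S) := by
  intro a b h
  have h1 : phiS S (p a b h) = phiFun S ⟨(a, b), h⟩ :=
    PresentedGroup.toGroup.of (phi_rels S)
  constructor
  · rintro ⟨ha, hb⟩
    rw [h1, phiFun, if_neg (by tauto)]
  · intro hm
    rw [h1, phiFun, if_pos hm]

end NSub2
namespace NSub2

lemma reverse {n : ℕ} (hn : 2 ≤ n) (S : Set (Fin n)) (hS : S.ncard = n - 2)
    (φ : PB n →* PB n) (hφ : IsPhi S φ) (q : PB n) (hq : q ∈ commutator (PB n)) :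
    φ q = 1 := by
  have hcompl : Sᶜ.ncard = 2 := by
    have h1 := Set.ncard_add_ncard_compl S
    have h2 : Nat.card (Fin n) = n := by simp
    have h3 : S.ncard ≤ n - 2 := le_of_eq hS
    omega
  have key : ∃ (a b : Fin n) (_ : a < b), Sᶜ = {a, b} := by
    obtain ⟨a, b, hne, hC⟩ := Set.ncard_eq_two.mp hcompl
    obtain hlt | hlt := hne.lt_or_gt
    · exact ⟨a, b, hlt, hC⟩
    · exact ⟨b, a, hlt, by rw [hC, Set.pair_comm]⟩
  obtain ⟨a, b, hab, hC⟩ := key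
  set g : PB n := p a b hab with hg
  have hall : ∀ x : PB n, φ x ∈ Subgroup.zpowers g := by
    intro x
    refine PresentedGroup.generated_by _ (Subgroup.comap φ (Subgroup.zpowers g)) ?_ x
    rintro ⟨⟨c, d⟩, hcd⟩
    have hphi := hφ c d hcd
    simp only [Subgroup.mem_comap]
    by_cases hm : c ∈ S ∨ d ∈ S
    · have : φ (p c d hcd) = 1 := hphi.2 hm
      show φ (p c d hcd) ∈ _
      rw [this]; exact one_mem _
    · push_neg at hm
      have hc' : c ∈ Sᶜ := hm.1
      have hd' : d ∈ Sᶜ := hm.2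
      rw [hC] at hc' hd'
      have hca : c = a ∧ d = b := by
        rcases hc' with rfl | rfl <;> rcases hd' with rfl | rfl
        · exact absurd hcd (lt_irrefl _)
        · exact ⟨rfl, rfl⟩
        · exact absurd hcd (asymm hab)
        · exact absurd hcd (lt_irrefl _)
      obtain ⟨rfl, rfl⟩ := hca
      have : φ (p c d hcd) = p c d hcd := hphi.1 ⟨hm.1, hm.2⟩
      show φ (p c d hcd) ∈ _
      rw [this]
      exact Subgroup.mem_zpowers _
  have hker : commutator (PB n) ≤ φ.ker := by
    rw [commutator_eq_closure, Subgroup.closure_le]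
    rintro x ⟨g1, g2, rfl⟩
    obtain ⟨k, hk⟩ := hall g1
    obtain ⟨l, hl⟩ := hall g2
    simp only [SetLike.mem_coe, MonoidHom.mem_ker, map_commutatorElement]
    rw [commutatorElement_eq_one_iff_commute, ← hk, ← hl]
    exact (Commute.refl g).zpow_zpow k l
  exact hker hq

lemma forward {n : ℕ} (hn : 2 ≤ n) (q : PB n)
    (H : ∀ S : Set (Fin n), S.ncard = n - 2 → ∀ φ : PB n →* PB n, IsPhi S φ → φ q = 1) :
    q ∈ commutator (PB n) := by
  rw [mem_comm_iff, ← theta_psi]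
  suffices hψ : psi n q = 1 by rw [hψ, map_one]
  have hco : ∀ t : Pr n, Multiplicative.toAdd (psi n q) t = 0 := by
    rintro ⟨⟨a, b⟩, hab⟩
    set t : Pr n := ⟨(a, b), hab⟩ with ht
    set S : Set (Fin n) := ({a, b} : Set (Fin n))ᶜ with hSdef
    have haS : a ∉ S := by simp [hSdef]
    have hbS : b ∉ S := by simp [hSdef]
    have hS : S.ncard = n - 2 := by
      have h1 := Set.ncard_add_ncard_compl S
      have h2 : Sᶜ.ncard = 2 := by
        rw [hSdef, compl_compl]
        exact Set.ncard_pair (ne_of_lt hab)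
      have h3 : Nat.card (Fin n) = n := by simp
      omega
    have hq1 : phiS S q = 1 := H S hS (phiS S) (isPhi_phiS S)
    set e : PB n →* Multiplicative ℤ :=
      (AddMonoidHom.toMultiplicative (Finsupp.applyAddHom t)).comp (psi n) with he
    have hee : e.comp (phiS S) = e := by
      ext s
      obtain ⟨⟨c, d⟩, hcd⟩ := s
      have h1 : phiS S (PresentedGroup.of (⟨(c, d), hcd⟩ : Pr n)) = phiFun S ⟨(c, d), hcd⟩ :=
        PresentedGroup.toGroup.of (phi_rels S)
      rw [MonoidHom.comp_apply, h1, phiFun]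
      by_cases hm : c ∈ S ∨ d ∈ S
      · rw [if_pos hm, map_one, he]
        have hne : (⟨(c, d), hcd⟩ : Pr n) ≠ t := by
          intro hEq
          rw [ht] at hEq
          have : c = a ∧ d = b := by
            constructor
            · exact congrArg (fun x => x.1.1) hEq
            · exact congrArg (fun x => x.1.2) hEq
          obtain ⟨rfl, rfl⟩ := this
          tauto
        simp only [MonoidHom.comp_apply, psi_of]
        rw [eq_comm]
        simp only [AddMonoidHom.toMultiplicative, Finsupp.applyAddHom_apply,
          MulEquiv.coe_mk, Equiv.coe_fn_mk, AddMonoidHom.coe_mk, ZeroHom.coe_mk]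
        simp [Finsupp.single_eq_of_ne' hne]
      · rw [if_neg hm]
        rfl
    have h2 : e q = 1 := by
      have := DFunLike.congr_fun hee q
      rw [MonoidHom.comp_apply, hq1, map_one] at this
      exact this.symm
    have h3 : e q = Multiplicative.ofAdd (Multiplicative.toAdd (psi n q) t) := by
      rw [he]
      rfl
    rw [h3] at h2
    exact Multiplicative.ofAdd.injective (by simpa using h2)
  have : Multiplicative.toAdd (psi n q) = 0 := Finsupp.ext hco
  calc psi n q = Multiplicative.ofAdd (Multiplicative.toAdd (psi n q)) := rfl
  _ = Multiplicative.ofAdd 0 := by rw [this]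
  _ = 1 := rfl

end NSub2


/-- Corollary 2.4: the subgroup of `(n-2)`-decomposable braids
equals the commutator subgroup of `P_n`. -/
theorem n_sub_two_decomposable (n : ℕ) (hn : 2 ≤ n) (q : PB n) :
    (∀ S : Set (Fin n), S.ncard = n - 2 →
        ∀ φ : PB n →* PB n, IsPhi S φ → φ q = 1) ↔
      q ∈ commutator (PB n) := by
  constructor
  · exact NSub2.forward hn q
  · intro hq S hS φ hφ
    exact NSub2.reverse hn S hS φ hφ q hq
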